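/- Assume cos(2nα)·(cos(2α) + sin(2α)) ≤ 1 (the large-α regime, so λ_B ≥ 0). Then the 3×2 matrix M is an isometry: Mᴴ·M = I₂. Equivalently, the vectors a₁ and a₂ form an orthonormal pair in ℂ³. (Isometry property of the optimal retrieval map, proved in Appendix D of the paper as Gᴴ·G = I.) -/

import Mathlib

open Matrix Kronecker Complex Filter
open scoped ComplexOrder

noncomputable section

/-- `|+⟩ = (1,1)/√2`. -/
def plusV : Fin 2 → ℂ := ((Real.sqrt 2 : ℂ))⁻¹ • ![1, 1]

/-- `|−⟩ = (1,−1)/√2`. -/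
def minusV : Fin 2 → ℂ := ((Real.sqrt 2 : ℂ))⁻¹ • ![1, -1]

/-- `λ_A = (1 + c̃ₙ(c̃ − s̃))/2`. -/
def lamA (n : ℕ) (α : ℝ) : ℝ :=
  (1 + Real.cos (2 * n * α) * (Real.cos (2 * α) - Real.sin (2 * α))) / 2

/-- `λ_B = (1 − c̃ₙ(c̃ + s̃))/2`. -/
def lamB (n : ℕ) (α : ℝ) : ℝ :=
  (1 - Real.cos (2 * n * α) * (Real.cos (2 * α) + Real.sin (2 * α))) / 2

/-- `ν₊ = c̃ₙ(1 − c̃² + s̃)/(1 + c̃ₙ)`. -/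
def nuP (n : ℕ) (α : ℝ) : ℝ :=
  Real.cos (2 * n * α) * (1 - Real.cos (2 * α) ^ 2 + Real.sin (2 * α)) / (1 + Real.cos (2 * n * α))

/-- `ν₋ = c̃ₙ(c̃² − 1 + s̃)/(1 − c̃ₙ)`. -/
def nuM (n : ℕ) (α : ℝ) : ℝ :=
  Real.cos (2 * n * α) * (Real.cos (2 * α) ^ 2 - 1 + Real.sin (2 * α)) / (1 - Real.cos (2 * n * α))

/-- `a₁ = (√λ_A·c/cₙ, √λ_B·s/cₙ, √ν₊)`. -/
def aOne (n : ℕ) (α : ℝ) : Fin 3 → ℂ :=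
  ![((Real.sqrt (lamA n α) * Real.cos α / Real.cos (n * α) : ℝ) : ℂ),
    ((Real.sqrt (lamB n α) * Real.sin α / Real.cos (n * α) : ℝ) : ℂ),
    ((Real.sqrt (nuP n α) : ℝ) : ℂ)]

/-- `a₂ = (√λ_A·s/sₙ, −√λ_B·c/sₙ, −√ν₋)`. -/
def aTwo (n : ℕ) (α : ℝ) : Fin 3 → ℂ :=
  ![((Real.sqrt (lamA n α) * Real.sin α / Real.sin (n * α) : ℝ) : ℂ),
    ((-(Real.sqrt (lamB n α) * Real.cos α / Real.sin (n * α)) : ℝ) : ℂ),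
    ((-Real.sqrt (nuM n α) : ℝ) : ℂ)]

/-- The qubit-to-qutrit isometry `M` with `M|+⟩ = a₁`, `M|−⟩ = a₂`. -/
def Mmat (n : ℕ) (α : ℝ) : Matrix (Fin 3) (Fin 2) ℂ :=
  Matrix.vecMulVec (aOne n α) (star plusV) + Matrix.vecMulVec (aTwo n α) (star minusV)

/-- Generic isometry criterion for a map built from two orthonormal image vectors. -/
lemma aux_isometry (x0 x1 x2 y0 y1 y2 : ℝ)
    (hX : x0^2 + x1^2 + x2^2 = 1) (hY : y0^2 + y1^2 + y2^2 = 1)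
    (hZ : x0*y0 + x1*y1 + x2*y2 = 0) :
    (Matrix.vecMulVec ![(x0:ℂ),(x1:ℂ),(x2:ℂ)] (star plusV)
      + Matrix.vecMulVec ![(y0:ℂ),(y1:ℂ),(y2:ℂ)] (star minusV))ᴴ *
    (Matrix.vecMulVec ![(x0:ℂ),(x1:ℂ),(x2:ℂ)] (star plusV)
      + Matrix.vecMulVec ![(y0:ℂ),(y1:ℂ),(y2:ℂ)] (star minusV)) = 1 := by
  have hr : Real.sqrt 2 ^ 2 = 2 := Real.sq_sqrt (by norm_num)
  have hr0 : Real.sqrt 2 ≠ 0 := by positivity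
  ext i j
  fin_cases i <;> fin_cases j <;>
    simp [plusV, minusV, Matrix.mul_apply, Fin.sum_univ_three,
      Matrix.conjTranspose_apply, Matrix.vecMulVec_apply, Matrix.one_apply, Matrix.add_apply, -Matrix.cons_vecMulVec] <;>
    norm_cast <;> field_simp <;>
  [ linear_combination hX + hY + 2*hZ - hr;
    linear_combination hX - hY;
    linear_combination hX - hY;
    linear_combination hX + hY - 2*hZ - hr ]

set_option maxHeartbeats 1000000 in
theorem retrieval_map_isometry (n : ℕ) (hn : 1 ≤ n) (α : ℝ) (hα : 0 < α)
    (hdist : 4 * n * α < Real.pi)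
    (hreg : Real.cos (2 * n * α) * (Real.cos (2 * α) + Real.sin (2 * α)) ≤ 1) :
    (Mmat n α)ᴴ * Mmat n α = 1 := by
  have hπ := Real.pi_pos
  have hnR : (1:ℝ) ≤ (n:ℝ) := by exact_mod_cast hn
  have hna : 0 < (n:ℝ) * α := by nlinarith
  have hαn : α ≤ (n:ℝ) * α := by nlinarith
  have h4 : 4 * ((n:ℝ) * α) < Real.pi := by linarith
  have hC : 0 < Real.cos ((n:ℝ) * α) :=
    Real.cos_pos_of_mem_Ioo ⟨by linarith, by linarith⟩
  have hS : 0 < Real.sin ((n:ℝ) * α) :=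
    Real.sin_pos_of_pos_of_lt_pi hna (by linarith)
  have hc : 0 < Real.cos α := Real.cos_pos_of_mem_Ioo ⟨by linarith, by linarith⟩
  have hs : 0 < Real.sin α := Real.sin_pos_of_pos_of_lt_pi hα (by linarith)
  have e2n : 2 * (n:ℝ) * α = 2 * ((n:ℝ) * α) := by ring
  have hc2n : 0 < Real.cos (2 * (n:ℝ) * α) := by
    rw [e2n]; exact Real.cos_pos_of_mem_Ioo ⟨by linarith, by linarith⟩
  have hc2nlt : Real.cos (2 * (n:ℝ) * α) < 1 := by
    rw [e2n]
    calc Real.cos (2 * ((n:ℝ)*α)) < Real.cos 0 :=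
          Real.cos_lt_cos_of_nonneg_of_le_pi le_rfl (by linarith) (by linarith)
      _ = 1 := Real.cos_zero
  have hsn2 : 0 < Real.sin (2 * (n:ℝ) * α) := by
    rw [e2n]; exact Real.sin_pos_of_pos_of_lt_pi (by linarith) (by linarith)
  have hc2 : 0 < Real.cos (2 * α) := Real.cos_pos_of_mem_Ioo ⟨by linarith, by linarith⟩
  have hs2 : 0 < Real.sin (2 * α) := Real.sin_pos_of_pos_of_lt_pi (by linarith) (by linarith)
  have hs2le : Real.sin (2 * α) ≤ 1 := Real.sin_le_one _
  have hc2le : Real.cos (2 * α) ≤ 1 := Real.cos_le_one _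
  have hpy2 : Real.sin (2*α)^2 + Real.cos (2*α)^2 = 1 := Real.sin_sq_add_cos_sq _
  have hpy2n : Real.sin (2*(n:ℝ)*α)^2 + Real.cos (2*(n:ℝ)*α)^2 = 1 := Real.sin_sq_add_cos_sq _
  -- nonnegativity of the four spectral quantities
  have hlamA : 0 ≤ lamA n α := by unfold lamA; nlinarith
  have hlamB : 0 ≤ lamB n α := by unfold lamB; linarith
  have hnuP : 0 ≤ nuP n α := by
    unfold nuP
    refine div_nonneg ?_ (by linarith)
    nlinarith
  have hnuM : 0 ≤ nuM n α := by
    unfold nuM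
    have h1 : 0 ≤ Real.sin (2*α) - Real.sin (2*α)^2 := by nlinarith
    refine div_nonneg ?_ (by linarith)
    nlinarith [mul_nonneg hc2n.le h1]
  -- half-angle facts
  have hCsq : Real.cos ((n:ℝ)*α)^2 = (1 + Real.cos (2*(n:ℝ)*α))/2 := by
    rw [e2n, Real.cos_two_mul]; ring
  have hSsq : Real.sin ((n:ℝ)*α)^2 = (1 - Real.cos (2*(n:ℝ)*α))/2 := by
    rw [e2n, Real.cos_two_mul, ← Real.sin_sq_add_cos_sq ((n:ℝ)*α)]; ring
  have hcsq : Real.cos α^2 = (1 + Real.cos (2*α))/2 := by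
    rw [Real.cos_two_mul]; ring
  have hssq : Real.sin α^2 = (1 - Real.cos (2*α))/2 := by
    rw [Real.cos_two_mul, ← Real.sin_sq_add_cos_sq α]; ring
  have hsin2 : Real.sin (2*α) = 2 * Real.sin α * Real.cos α := Real.sin_two_mul α
  have hsin2n : Real.sin (2*(n:ℝ)*α) = 2 * Real.sin ((n:ℝ)*α) * Real.cos ((n:ℝ)*α) := by
    rw [e2n, Real.sin_two_mul]
  -- norm of a₁
  have hX : (Real.sqrt (lamA n α) * Real.cos α / Real.cos ((n:ℝ)*α))^2
      + (Real.sqrt (lamB n α) * Real.sin α / Real.cos ((n:ℝ)*α))^2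
      + (Real.sqrt (nuP n α))^2 = 1 := by
    rw [div_pow, div_pow, mul_pow, mul_pow, Real.sq_sqrt hlamA, Real.sq_sqrt hlamB,
      Real.sq_sqrt hnuP]
    unfold lamA lamB nuP
    rw [hCsq, hcsq, hssq]
    field_simp
    ring
  -- norm of a₂
  have hY : (Real.sqrt (lamA n α) * Real.sin α / Real.sin ((n:ℝ)*α))^2
      + (-(Real.sqrt (lamB n α) * Real.cos α / Real.sin ((n:ℝ)*α)))^2
      + (-Real.sqrt (nuM n α))^2 = 1 := by
    rw [neg_sq, neg_sq, div_pow, div_pow, mul_pow, mul_pow, Real.sq_sqrt hlamA,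
      Real.sq_sqrt hlamB, Real.sq_sqrt hnuM]
    unfold lamA lamB nuM
    rw [hSsq, hcsq, hssq]
    have hd : 1 - Real.cos (2*(n:ℝ)*α) ≠ 0 := by linarith
    field_simp
    ring
  -- product of the two ν's
  have hT : 0 ≤ Real.cos (2*(n:ℝ)*α) * Real.cos (2*α) * Real.sin (2*α)
      / Real.sin (2*(n:ℝ)*α) := by positivity
  have hprod : nuP n α * nuM n α
      = (Real.cos (2*(n:ℝ)*α) * Real.cos (2*α) * Real.sin (2*α) / Real.sin (2*(n:ℝ)*α))^2 := by
    unfold nuP nuM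
    rw [div_mul_div_comm, div_pow]
    have num : Real.cos (2*(n:ℝ)*α) * (1 - Real.cos (2*α)^2 + Real.sin (2*α))
        * (Real.cos (2*(n:ℝ)*α) * (Real.cos (2*α)^2 - 1 + Real.sin (2*α)))
        = (Real.cos (2*(n:ℝ)*α) * Real.cos (2*α) * Real.sin (2*α))^2 := by
      linear_combination (Real.cos (2*(n:ℝ)*α)^2 * (1 - Real.cos (2*α)^2)) * hpy2
    have den : (1 + Real.cos (2*(n:ℝ)*α)) * (1 - Real.cos (2*(n:ℝ)*α))
        = Real.sin (2*(n:ℝ)*α)^2 := by linear_combination -hpy2n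
    rw [num, den]
  -- orthogonality of a₁ and a₂
  have goal2 : (lamA n α - lamB n α) * (Real.cos α * Real.sin α)
      / (Real.cos ((n:ℝ)*α) * Real.sin ((n:ℝ)*α))
      = Real.cos (2*(n:ℝ)*α) * Real.cos (2*α) * Real.sin (2*α) / Real.sin (2*(n:ℝ)*α) := by
    unfold lamA lamB
    rw [hsin2, hsin2n]
    field_simp
    ring
  have hsqrtprod : Real.sqrt (nuP n α) * Real.sqrt (nuM n α)
      = Real.cos (2*(n:ℝ)*α) * Real.cos (2*α) * Real.sin (2*α) / Real.sin (2*(n:ℝ)*α) := by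
    rw [← Real.sqrt_mul hnuP, hprod, Real.sqrt_sq hT]
  have hA2 : Real.sqrt (lamA n α) * Real.sqrt (lamA n α) = lamA n α := Real.mul_self_sqrt hlamA
  have hB2 : Real.sqrt (lamB n α) * Real.sqrt (lamB n α) = lamB n α := Real.mul_self_sqrt hlamB
  have hZ : (Real.sqrt (lamA n α) * Real.cos α / Real.cos ((n:ℝ)*α))
        * (Real.sqrt (lamA n α) * Real.sin α / Real.sin ((n:ℝ)*α))
      + (Real.sqrt (lamB n α) * Real.sin α / Real.cos ((n:ℝ)*α))
        * (-(Real.sqrt (lamB n α) * Real.cos α / Real.sin ((n:ℝ)*α)))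
      + Real.sqrt (nuP n α) * (-Real.sqrt (nuM n α)) = 0 := by
    have h1 : Real.sqrt (nuP n α) * (-Real.sqrt (nuM n α))
        = -((lamA n α - lamB n α) * (Real.cos α * Real.sin α)
            / (Real.cos ((n:ℝ)*α) * Real.sin ((n:ℝ)*α))) := by
      rw [mul_neg, hsqrtprod, ← goal2]
    rw [h1]
    linear_combination (Real.cos α * Real.sin α / (Real.cos ((n:ℝ)*α) * Real.sin ((n:ℝ)*α))) * hA2
      - (Real.cos α * Real.sin α / (Real.cos ((n:ℝ)*α) * Real.sin ((n:ℝ)*α))) * hB2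
  -- assemble
  show (Matrix.vecMulVec (aOne n α) (star plusV)
      + Matrix.vecMulVec (aTwo n α) (star minusV))ᴴ *
    (Matrix.vecMulVec (aOne n α) (star plusV)
      + Matrix.vecMulVec (aTwo n α) (star minusV)) = 1
  rw [show aOne n α = ![((Real.sqrt (lamA n α) * Real.cos α / Real.cos ((n:ℝ) * α) : ℝ) : ℂ),
        ((Real.sqrt (lamB n α) * Real.sin α / Real.cos ((n:ℝ) * α) : ℝ) : ℂ),
        ((Real.sqrt (nuP n α) : ℝ) : ℂ)] from rfl,
      show aTwo n α = ![((Real.sqrt (lamA n α) * Real.sin α / Real.sin ((n:ℝ) * α) : ℝ) : ℂ),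
        ((-(Real.sqrt (lamB n α) * Real.cos α / Real.sin ((n:ℝ) * α)) : ℝ) : ℂ),
        ((-Real.sqrt (nuM n α) : ℝ) : ℂ)] from rfl]
  exact aux_isometry _ _ _ _ _ _ hX hY hZ
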